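/- Let G be a group generated by two elements α and β satisfying α⁴ = 1, β⁴ = 1, and (αβ)² = 1. Let c₀ and c₁ be the bijections of ℂ given by c₀(z) = i·z and c₁(z) = 1 + i·z, which are elements of the group Γ. Then there exists a surjective group homomorphism f : Γ → G with f(c₀) = α and f(c₁) = β. In other words, Γ is the universal group of type (4,4,2). -/

import Mathlib

open Complex

/-- Every complex fourth root of unity is a Gaussian integer. -/
lemma exists_gaussian_of_pow_four_eq_one {u : ℂ} (hu : u ^ 4 = 1) :
    ∃ g : GaussianInt, (g : ℂ) = u := by
  have h1 : (u ^ 2 - 1) * (u ^ 2 + 1) = 0 := by linear_combination hu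
  rcases mul_eq_zero.mp h1 with h | h
  · have h2 : (u - 1) * (u + 1) = 0 := by linear_combination h
    rcases mul_eq_zero.mp h2 with h3 | h3
    · exact ⟨1, by rw [map_one, (sub_eq_zero.mp h3).symm]⟩
    · exact ⟨-1, by rw [map_neg, map_one, (eq_neg_of_add_eq_zero_left h3).symm]⟩
  · have h2 : (u - I) * (u + I) = 0 := by linear_combination h - Complex.I_sq
    rcases mul_eq_zero.mp h2 with h3 | h3
    · refine ⟨⟨0, 1⟩, ?_⟩
      rw [sub_eq_zero.mp h3, GaussianInt.toComplex_def']
      simp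
    · refine ⟨⟨0, -1⟩, ?_⟩
      rw [eq_neg_of_add_eq_zero_left h3, GaussianInt.toComplex_def']
      push_cast
      ring

/-- The group `Γ` of bijections of `ℂ` of the form `z ↦ u·z + λ` with `u⁴ = 1` and
`λ` in the image of the Gaussian integers, viewed as a subgroup of `Equiv.Perm ℂ`. -/
def GammaGroup : Subgroup (Equiv.Perm ℂ) where
  carrier := {e | ∃ u lam : ℂ, u ^ 4 = 1 ∧ (∃ g : GaussianInt, (g : ℂ) = lam) ∧
    ∀ z : ℂ, e z = u * z + lam}
  one_mem' := ⟨1, 0, one_pow 4, ⟨0, map_zero _⟩, fun z => by simp⟩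
  mul_mem' := by
    rintro f g ⟨u₁, lam₁, hu₁, ⟨g₁, hg₁⟩, hf⟩ ⟨u₂, lam₂, hu₂, ⟨g₂, hg₂⟩, hg⟩
    obtain ⟨gu₁, hgu₁⟩ := exists_gaussian_of_pow_four_eq_one hu₁
    refine ⟨u₁ * u₂, u₁ * lam₂ + lam₁, by rw [mul_pow, hu₁, hu₂, one_mul],
      ⟨gu₁ * g₂ + g₁, by rw [map_add, map_mul, hgu₁, hg₂, hg₁]⟩, fun z => ?_⟩
    show f (g z) = _
    rw [hg, hf]
    ring
  inv_mem' := by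
    rintro e ⟨u, lam, hu, ⟨g, hg⟩, he⟩
    obtain ⟨gu, hgu⟩ := exists_gaussian_of_pow_four_eq_one hu
    refine ⟨u ^ 3, -(u ^ 3 * lam), by rw [← pow_mul, mul_comm, pow_mul, hu, one_pow],
      ⟨-(gu ^ 3 * g), by rw [map_neg, map_mul, map_pow, hgu, hg]⟩, fun z => ?_⟩
    have key : e (u ^ 3 * z + -(u ^ 3 * lam)) = z := by
      rw [he]; linear_combination (z - lam) * hu
    have h2 : e (e⁻¹ z) = e (u ^ 3 * z + -(u ^ 3 * lam)) := by
      rw [key]; exact Equiv.apply_symm_apply e z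
    exact e.injective h2

/-- The rotation `c₀ : z ↦ i·z`. -/
noncomputable def c0 : Equiv.Perm ℂ := Equiv.mulLeft₀ I I_ne_zero

/-- The map `c₁ : z ↦ 1 + i·z`. -/
noncomputable def c1 : Equiv.Perm ℂ := (Equiv.mulLeft₀ I I_ne_zero).trans (Equiv.addLeft 1)

lemma c0_apply (z : ℂ) : c0 z = I * z := rfl

lemma c1_apply (z : ℂ) : c1 z = 1 + I * z := rfl

lemma c0_mem : c0 ∈ GammaGroup :=
  ⟨I, 0, Complex.I_pow_four, ⟨0, map_zero _⟩, fun z => by rw [c0_apply, add_zero]⟩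

lemma c1_mem : c1 ∈ GammaGroup :=
  ⟨I, 1, Complex.I_pow_four, ⟨1, map_one _⟩, fun z => by rw [c1_apply, add_comm]⟩


section Aux
variable {G : Type*} [Group G]

def sEl (α β : G) : G := β * α⁻¹
def tEl (α β : G) : G := α * sEl α β * α⁻¹

noncomputable def Tm (α β : G) (lam : ℂ) : G :=
  sEl α β ^ (round lam.re) * tEl α β ^ (round lam.im)

open scoped Classical in
noncomputable def kIndex (u : ℂ) : ℕ :=
  if u = 1 then 0 else if u = I then 1 else if u = -1 then 2 else 3

noncomputable def Rm (α : G) (u : ℂ) : G := α ^ kIndex u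

variable {α β : G}

lemma h2' (hαβ : (α*β)^2 = 1) : α * β = β⁻¹ * α⁻¹ := by
  have h : α*β*(α*β) = 1 := by rw [← sq]; exact hαβ
  calc α*β = (α*β*(α*β)) * β⁻¹ * α⁻¹ := by group
    _ = β⁻¹ * α⁻¹ := by rw [h]; group

lemma hA' (hα : α^4 = 1) : α⁻¹ * α⁻¹ * α⁻¹ = α := by
  calc α⁻¹*α⁻¹*α⁻¹ = (α^4)⁻¹ * α := by group
    _ = α := by rw [hα]; group

lemma hB' (hβ : β^4 = 1) : β⁻¹ * β⁻¹ = β * β := by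
  calc β⁻¹*β⁻¹ = (β^4)⁻¹ * (β*β) := by group
    _ = β*β := by rw [hβ]; group

lemma hconj_t (hα : α^4 = 1) (hαβ : (α*β)^2 = 1) :
    α * tEl α β * α⁻¹ = (sEl α β)⁻¹ := by
  have h : α*β*(α*β) = 1 := by rw [← sq]; exact hαβ
  unfold tEl sEl
  calc α * (α * (β*α⁻¹) * α⁻¹) * α⁻¹ = α*α*β*(α⁻¹*α⁻¹*α⁻¹) := by group
    _ = α*α*β*α := by rw [hA' hα]
    _ = α * (α*β*(α*β)) * β⁻¹ := by group
    _ = α * 1 * β⁻¹ := by rw [h]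
    _ = (β*α⁻¹)⁻¹ := by group

lemma hst (hα : α^4 = 1) (hβ : β^4 = 1) (hαβ : (α*β)^2 = 1) :
    Commute (sEl α β) (tEl α β) := by
  have h2 := h2' hαβ
  show sEl α β * tEl α β = tEl α β * sEl α β
  unfold tEl sEl
  symm
  calc (α*(β*α⁻¹)*α⁻¹) * (β*α⁻¹) = (α*β)*(α⁻¹*α⁻¹*β*α⁻¹) := by group
    _ = (β⁻¹*α⁻¹)*(α⁻¹*α⁻¹*β*α⁻¹) := by rw [h2]
    _ = β⁻¹*(α⁻¹*α⁻¹*α⁻¹)*(β*α⁻¹) := by group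
    _ = β⁻¹*α*(β*α⁻¹) := by rw [hA' hα]
    _ = β⁻¹*(α*β)*α⁻¹ := by group
    _ = β⁻¹*(β⁻¹*α⁻¹)*α⁻¹ := by rw [h2]
    _ = (β⁻¹*β⁻¹)*(α⁻¹*α⁻¹) := by group
    _ = (β*β)*(α⁻¹*α⁻¹) := by rw [hB' hβ]
    _ = (β*α⁻¹)*(α*(β*α⁻¹)*α⁻¹) := by group

lemma conj_s_pow (m : ℤ) : α * sEl α β ^ m * α⁻¹ = tEl α β ^ m := by
  have := map_zpow (MulAut.conj α) (sEl α β) m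
  simp only [MulAut.conj_apply] at this
  rw [this]; rfl

lemma conj_t_pow (hα : α^4 = 1) (hαβ : (α*β)^2 = 1) (m : ℤ) :
    α * tEl α β ^ m * α⁻¹ = sEl α β ^ (-m) := by
  have := map_zpow (MulAut.conj α) (tEl α β) m
  simp only [MulAut.conj_apply] at this
  rw [this, hconj_t hα hαβ, ← zpow_neg_one, ← zpow_mul]
  ring_nf

def gi : GaussianInt := ⟨0, 1⟩

lemma gi_coe : (gi : ℂ) = I := by rw [GaussianInt.toComplex_def']; simp [gi]

lemma Tm_coe (g : GaussianInt) : Tm α β (g : ℂ) = sEl α β ^ g.re * tEl α β ^ g.im := by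
  have hre : (g : ℂ).re = (g.re : ℝ) := by rw [GaussianInt.toComplex_def]; simp
  have him : (g : ℂ).im = (g.im : ℝ) := by rw [GaussianInt.toComplex_def]; simp
  rw [Tm, hre, him, round_intCast, round_intCast]

lemma Tm_add (hα : α^4 = 1) (hβ : β^4 = 1) (hαβ : (α*β)^2 = 1) (g h : GaussianInt) :
    Tm α β ((g + h : GaussianInt) : ℂ) = Tm α β (g : ℂ) * Tm α β (h : ℂ) := by
  rw [Tm_coe, Tm_coe, Tm_coe, Zsqrtd.re_add, Zsqrtd.im_add, zpow_add, zpow_add]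
  exact ((hst hα hβ hαβ).zpow_zpow h.re g.im).mul_mul_mul_comm _ _

lemma stepD (hα : α^4 = 1) (hβ : β^4 = 1) (hαβ : (α*β)^2 = 1) (g : GaussianInt) :
    α * Tm α β (g : ℂ) * α⁻¹ = Tm α β ((gi * g : GaussianInt) : ℂ) := by
  have hre : (gi * g).re = -g.im := by rw [Zsqrtd.re_mul]; show 0*g.re + -1*1*g.im = -g.im; ring
  have him : (gi * g).im = g.re := by rw [Zsqrtd.im_mul]; show 0*g.im + 1*g.re = g.re; ring
  rw [Tm_coe, Tm_coe, hre, him]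
  calc α * (sEl α β ^ g.re * tEl α β ^ g.im) * α⁻¹
      = (α * sEl α β ^ g.re * α⁻¹) * (α * tEl α β ^ g.im * α⁻¹) := by group
    _ = tEl α β ^ g.re * sEl α β ^ (-g.im) := by rw [conj_s_pow, conj_t_pow hα hαβ]
    _ = sEl α β ^ (-g.im) * tEl α β ^ g.re := ((hst hα hβ hαβ).zpow_zpow (-g.im) g.re).eq.symm

lemma iterD (hα : α^4 = 1) (hβ : β^4 = 1) (hαβ : (α*β)^2 = 1) (k : ℕ) (g : GaussianInt) :
    α ^ k * Tm α β (g : ℂ) * (α ^ k)⁻¹ = Tm α β ((gi ^ k * g : GaussianInt) : ℂ) := by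
  induction k with
  | zero => simp
  | succ n ih =>
    have : α ^ (n+1) * Tm α β (g : ℂ) * (α ^ (n+1))⁻¹
        = α * (α ^ n * Tm α β (g : ℂ) * (α ^ n)⁻¹) * α⁻¹ := by group
    rw [this, ih, stepD hα hβ hαβ, ← mul_assoc, ← pow_succ']

lemma root_cases {u : ℂ} (hu : u ^ 4 = 1) : u = 1 ∨ u = I ∨ u = -1 ∨ u = -I := by
  have h1 : (u ^ 2 - 1) * (u ^ 2 + 1) = 0 := by linear_combination hu
  rcases mul_eq_zero.mp h1 with h | h
  · have h2 : (u - 1) * (u + 1) = 0 := by linear_combination h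
    rcases mul_eq_zero.mp h2 with h3 | h3
    · exact Or.inl (by linear_combination h3)
    · exact Or.inr (Or.inr (Or.inl (by linear_combination h3)))
  · have h2 : (u - I) * (u + I) = 0 := by linear_combination h - Complex.I_sq
    rcases mul_eq_zero.mp h2 with h3 | h3
    · exact Or.inr (Or.inl (by linear_combination h3))
    · exact Or.inr (Or.inr (Or.inr (by linear_combination h3)))

lemma exp_form {u : ℂ} (hu : u ^ 4 = 1) : ∃ j : ℕ, u = I ^ j := by
  rcases root_cases hu with h | h | h | h
  · exact ⟨0, by simp [h]⟩
  · exact ⟨1, by simp [h]⟩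
  · exact ⟨2, by rw [h, sq, Complex.I_mul_I]⟩
  · exact ⟨3, by rw [h, pow_succ, sq, Complex.I_mul_I]; simp⟩

lemma kIndex_vals : kIndex (1:ℂ) = 0 ∧ kIndex I = 1 ∧ kIndex (-1:ℂ) = 2 ∧ kIndex (-I) = 3 := by
  refine ⟨?_, ?_, ?_, ?_⟩ <;>
    simp [kIndex, Complex.ext_iff] <;> norm_num

lemma R_I_pow (hα : α^4 = 1) (j : ℕ) : Rm α (I ^ j) = α ^ j := by
  obtain ⟨h0, h1, h2, h3⟩ := (kIndex_vals : _)
  have hImod : (I:ℂ) ^ j = I ^ (j % 4) := by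
    conv_lhs => rw [← Nat.div_add_mod j 4]
    rw [pow_add, pow_mul, I_pow_four, one_pow, one_mul]
  have hαmod : α ^ j = α ^ (j % 4) := by
    conv_lhs => rw [← Nat.div_add_mod j 4]
    rw [pow_add, pow_mul, hα, one_pow, one_mul]
  rw [Rm, hImod, hαmod]
  have : j % 4 < 4 := Nat.mod_lt _ (by norm_num)
  interval_cases h : j % 4
  · simpa using congrArg (α ^ ·) h0
  · simpa using congrArg (α ^ ·) h1
  · rw [show (I:ℂ)^2 = -1 from Complex.I_sq, h2]
  · rw [show (I:ℂ)^3 = -I by rw [pow_succ, Complex.I_sq]; ring, h3]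

end Aux

/-- `Γ` is the universal group of type `(4,4,2)`: for any group `G`
generated by `α, β` with `α⁴ = β⁴ = (αβ)² = 1` there is a surjective homomorphism
`Γ → G` sending `c₀ : z ↦ i·z` to `α` and `c₁ : z ↦ 1 + i·z` to `β`. -/
theorem stmt5 {G : Type*} [Group G] (α β : G)
    (hgen : Subgroup.closure {α, β} = ⊤)
    (hα : α ^ 4 = 1) (hβ : β ^ 4 = 1) (hαβ : (α * β) ^ 2 = 1) :
    ∃ f : GammaGroup →* G, Function.Surjective f ∧
      f ⟨c0, c0_mem⟩ = α ∧ f ⟨c1, c1_mem⟩ = β := by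
  classical
  have hmul : ∀ e e' : GammaGroup,
      (fun e : GammaGroup => Tm α β ((e : Equiv.Perm ℂ) 0) *
          Rm α ((e : Equiv.Perm ℂ) 1 - (e : Equiv.Perm ℂ) 0)) (e * e')
      = (fun e : GammaGroup => Tm α β ((e : Equiv.Perm ℂ) 0) *
          Rm α ((e : Equiv.Perm ℂ) 1 - (e : Equiv.Perm ℂ) 0)) e *
        (fun e : GammaGroup => Tm α β ((e : Equiv.Perm ℂ) 0) *
          Rm α ((e : Equiv.Perm ℂ) 1 - (e : Equiv.Perm ℂ) 0)) e' := by
    rintro ⟨e, u, lam, hu, ⟨g, hg⟩, he⟩ ⟨e', u', lam', hu', ⟨g', hg'⟩, he'⟩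
    simp only [Subgroup.coe_mul, Equiv.Perm.mul_apply]
    have he0 : e (e' 0) = u * lam' + lam := by rw [he, he']; ring
    have he1 : e (e' 1) = u * (u' * 1 + lam') + lam := by rw [he, he']
    rw [he0, he1, he 0, he 1, he' 0, he' 1]
    have hd1 : u * (u' * 1 + lam') + lam - (u * lam' + lam) = u * u' := by ring
    have hd2 : u * 1 + lam - (u * 0 + lam) = u := by ring
    have hd3 : u' * 1 + lam' - (u' * 0 + lam') = u' := by ring
    have hl2 : u * 0 + lam = lam := by ring
    have hl3 : u' * 0 + lam' = lam' := by ring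
    rw [hd1, hd2, hd3, hl2, hl3]
    obtain ⟨j, hj⟩ := exp_form hu
    obtain ⟨j', hj'⟩ := exp_form hu'
    have hx : u * lam' + lam = ((g + gi ^ j * g' : GaussianInt) : ℂ) := by
      rw [map_add, map_mul, map_pow, gi_coe, hg, hg', hj]; ring
    rw [hx, ← hg, ← hg', hj, hj', ← pow_add, R_I_pow hα, R_I_pow hα, R_I_pow hα,
      Tm_add hα hβ hαβ]
    have h5 := iterD hα hβ hαβ j g'
    rw [mul_inv_eq_iff_eq_mul] at h5
    calc Tm α β (g : ℂ) * Tm α β ((gi ^ j * g' : GaussianInt) : ℂ) * α ^ (j + j')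
        = Tm α β (g : ℂ) * ((Tm α β ((gi ^ j * g' : GaussianInt) : ℂ) * α ^ j) * α ^ j') := by
          rw [pow_add]; group
      _ = Tm α β (g : ℂ) * ((α ^ j * Tm α β (g' : ℂ)) * α ^ j') := by rw [← h5]
      _ = Tm α β (g : ℂ) * α ^ j * (Tm α β (g' : ℂ) * α ^ j') := by group
  refine ⟨MonoidHom.mk' (fun e : GammaGroup => Tm α β ((e : Equiv.Perm ℂ) 0) *
      Rm α ((e : Equiv.Perm ℂ) 1 - (e : Equiv.Perm ℂ) 0)) hmul, ?_, ?_, ?_⟩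
  · -- surjectivity
    have hc0 : (MonoidHom.mk' (fun e : GammaGroup => Tm α β ((e : Equiv.Perm ℂ) 0) * Rm α ((e : Equiv.Perm ℂ) 1 - (e : Equiv.Perm ℂ) 0)) hmul) (⟨c0, c0_mem⟩ : GammaGroup) = α := by
      show Tm α β (c0 0) * Rm α (c0 1 - c0 0) = α
      rw [c0_apply, c0_apply, mul_zero, mul_one]
      have : Tm α β 0 = 1 := by simp [Tm]
      rw [this, one_mul, sub_zero, Rm, kIndex_vals.2.1, pow_one]
    have hc1 : (MonoidHom.mk' (fun e : GammaGroup => Tm α β ((e : Equiv.Perm ℂ) 0) * Rm α ((e : Equiv.Perm ℂ) 1 - (e : Equiv.Perm ℂ) 0)) hmul) (⟨c1, c1_mem⟩ : GammaGroup) = β := by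
      show Tm α β (c1 0) * Rm α (c1 1 - c1 0) = β
      rw [c1_apply, c1_apply, mul_zero, mul_one, add_zero]
      have h1 : (1 + I) - 1 = I := by ring
      have h2 : Tm α β 1 = β * α⁻¹ := by
        simp [Tm, sEl]
      rw [h1, h2, Rm, kIndex_vals.2.1, pow_one]
      group
    have hle : Subgroup.closure {α, β} ≤ (MonoidHom.mk' (fun e : GammaGroup => Tm α β ((e : Equiv.Perm ℂ) 0) * Rm α ((e : Equiv.Perm ℂ) 1 - (e : Equiv.Perm ℂ) 0)) hmul).range := by
      rw [Subgroup.closure_le]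
      rintro x hx
      rcases hx with rfl | rfl
      · exact ⟨⟨c0, c0_mem⟩, hc0⟩
      · exact ⟨⟨c1, c1_mem⟩, hc1⟩
    rw [hgen] at hle
    exact MonoidHom.range_eq_top.mp (top_unique hle)
  · show Tm α β (c0 0) * Rm α (c0 1 - c0 0) = α
    rw [c0_apply, c0_apply, mul_zero, mul_one]
    have : Tm α β 0 = 1 := by simp [Tm]
    rw [this, one_mul, sub_zero, Rm, kIndex_vals.2.1, pow_one]
  · show Tm α β (c1 0) * Rm α (c1 1 - c1 0) = β
    rw [c1_apply, c1_apply, mul_zero, mul_one, add_zero]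
    have h1 : (1 + I) - 1 = I := by ring
    have h2 : Tm α β 1 = β * α⁻¹ := by simp [Tm, sEl]
    rw [h1, h2, Rm, kIndex_vals.2.1, pow_one]
    group
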